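/- arXiv:math/0605553 — 2 statements merged into one kernel-verified Lean document; each statement's English description precedes it below -/
import Mathlib

section
/- For every finitely generated group Γ and every positive integer n, there exists a finitely presented group Q and a surjective homomorphism π: Q → Γ such that every homomorphism Q → GL_n(ℂ) factors through π; that is, the map Hom(Γ, GL_n(ℂ)) → Hom(Q, GL_n(ℂ)) induced by precomposition with π is a bijection. -/
noncomputable section Stmt8AuxSec

open MvPolynomial Matrix

variable (m n : ℕ)

abbrev Stmt8Aux.Svar := Fin m × Fin n × Fin n × Bool
abbrev Stmt8Aux.S := MvPolynomial (Stmt8Aux.Svar m n) ℂ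

def Stmt8Aux.Xm (i : Fin m) (b : Bool) : Matrix (Fin n) (Fin n) (Stmt8Aux.S m n) :=
  Matrix.of fun j k => MvPolynomial.X (i, j, k, b)

def Stmt8Aux.J : Ideal (Stmt8Aux.S m n) :=
  Ideal.span {p | ∃ i j k,
    p = (Stmt8Aux.Xm m n i false * Stmt8Aux.Xm m n i true - 1) j k ∨
    p = (Stmt8Aux.Xm m n i true * Stmt8Aux.Xm m n i false - 1) j k}

abbrev Stmt8Aux.A := Stmt8Aux.S m n ⧸ Stmt8Aux.J m n

namespace Stmt8Aux

def mk : S m n →+* A m n := Ideal.Quotient.mk (J m n)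

lemma entry_mem_J (i : Fin m) (j k : Fin n) :
    (Xm m n i false * Xm m n i true - 1) j k ∈ J m n ∧
    (Xm m n i true * Xm m n i false - 1) j k ∈ J m n :=
  ⟨Ideal.subset_span ⟨i, j, k, Or.inl rfl⟩, Ideal.subset_span ⟨i, j, k, Or.inr rfl⟩⟩

lemma map_mul_inv (i : Fin m) (b b' : Bool) (h : b ≠ b') :
    ((Xm m n i b).map (mk m n)) * ((Xm m n i b').map (mk m n)) = 1 := by
  have key : ∀ (M N : Matrix (Fin n) (Fin n) (S m n)),
      (∀ j k, (M * N - 1) j k ∈ J m n) → (M.map (mk m n)) * (N.map (mk m n)) = 1 := by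
    intro M N hMN
    have hz : ((M * N - 1).map (mk m n)) = 0 := by
      ext j k
      simpa [mk] using (Ideal.Quotient.eq_zero_iff_mem).2 (hMN j k)
    have h2 : ((M * N).map (mk m n)) - 1 = 0 := by
      rw [← hz, Matrix.map_sub _ (by simp)]
      congr 1
      exact (Matrix.map_one _ (map_zero _) (map_one _)).symm
    rw [← Matrix.map_mul]
    exact sub_eq_zero.mp h2
  cases b <;> cases b' <;> simp_all
  · exact key _ _ fun j k => (entry_mem_J m n i j k).1
  · exact key _ _ fun j k => (entry_mem_J m n i j k).2

def U (i : Fin m) : (Matrix (Fin n) (Fin n) (A m n))ˣ :=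
  ⟨(Xm m n i false).map (mk m n), (Xm m n i true).map (mk m n),
    map_mul_inv m n i false true (by simp), map_mul_inv m n i true false (by simp)⟩

def g : FreeGroup (Fin m) →* (Matrix (Fin n) (Fin n) (A m n))ˣ :=
  FreeGroup.lift (U m n)

variable (p : Fin m → Matrix.GeneralLinearGroup (Fin n) ℂ)

def evh : S m n →+* ℂ :=
  (MvPolynomial.aeval (fun v : Svar m n =>
    if v.2.2.2 then (((p v.1)⁻¹ : GL (Fin n) ℂ) : Matrix (Fin n) (Fin n) ℂ) v.2.1 v.2.2.1
    else ((p v.1 : Matrix (Fin n) (Fin n) ℂ)) v.2.1 v.2.2.1)).toRingHom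

lemma evh_Xm (i : Fin m) (b : Bool) :
    (Xm m n i b).map (evh m n p) =
      if b then (((p i)⁻¹ : GL (Fin n) ℂ) : Matrix (Fin n) (Fin n) ℂ)
      else (p i : Matrix (Fin n) (Fin n) ℂ) := by
  cases b <;> · ext j k; simp [evh, Xm]

lemma J_le_ker : J m n ≤ RingHom.ker (evh m n p) := by
  rw [J, Ideal.span_le]
  rintro x ⟨i, j, k, h | h⟩ <;> subst h
  · rw [SetLike.mem_coe, RingHom.mem_ker]
    show ((Xm m n i false * Xm m n i true - 1).map (evh m n p)) j k = 0
    rw [Matrix.map_sub _ (by simp), Matrix.map_mul, evh_Xm, evh_Xm,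
      Matrix.map_one _ (map_zero _) (map_one _)]
    simp [← Matrix.coe_units_inv, ← Units.val_mul]
  · rw [SetLike.mem_coe, RingHom.mem_ker]
    show ((Xm m n i true * Xm m n i false - 1).map (evh m n p)) j k = 0
    rw [Matrix.map_sub _ (by simp), Matrix.map_mul, evh_Xm, evh_Xm,
      Matrix.map_one _ (map_zero _) (map_one _)]
    simp [← Matrix.coe_units_inv, ← Units.val_mul]

def evA : A m n →+* ℂ := Ideal.Quotient.lift (J m n) (evh m n p) (J_le_ker m n p)

def glmap : (Matrix (Fin n) (Fin n) (A m n))ˣ →* (Matrix (Fin n) (Fin n) ℂ)ˣ :=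
  Units.map ((evA m n p).mapMatrix).toMonoidHom

lemma evA_mk (x : S m n) : evA m n p (mk m n x) = evh m n p x := rfl

lemma glmap_comp_g : (glmap m n p).comp (g m n) = FreeGroup.lift p := by
  apply FreeGroup.ext_hom
  intro i
  have h1 : (g m n) (FreeGroup.of i) = U m n i := FreeGroup.lift_apply_of
  rw [MonoidHom.comp_apply, h1, FreeGroup.lift_apply_of]
  apply Units.ext
  show ((Xm m n i false).map (mk m n)).map (evA m n p) = (p i : Matrix (Fin n) (Fin n) ℂ)
  rw [Matrix.map_map]
  have h2 : (evA m n p : A m n → ℂ) ∘ (mk m n : S m n → A m n) = evh m n p :=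
    funext fun x => evA_mk m n p x
  rw [h2]
  simpa using evh_Xm m n p i false

end Stmt8Aux
end Stmt8AuxSec


/-- For every finitely generated group `Γ` and every `n > 0` there is a finitely
presented group `Q` (a quotient of a free group of finite rank by the normal closure of
finitely many relators) and a surjection `π : Q → Γ` such that precomposition with `π`
is a bijection `Hom(Γ, GL_n(ℂ)) → Hom(Q, GL_n(ℂ))`. -/
theorem stmt8 (Γ : Type) [Group Γ] [Group.FG Γ] (n : ℕ) (hn : 0 < n) :
    ∃ (m : ℕ) (R : Finset (FreeGroup (Fin m)))
      (π : (FreeGroup (Fin m) ⧸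
        Subgroup.normalClosure (R : Set (FreeGroup (Fin m)))) →* Γ),
      Function.Surjective π ∧
      Function.Bijective
        (fun ρ : Γ →* Matrix.GeneralLinearGroup (Fin n) ℂ => ρ.comp π) := by
  classical
  obtain ⟨m0, S, hcard, hcl⟩ := (Group.fg_iff' (G := Γ)).mp inferInstance
  set m := S.card with hm
  refine ⟨m, ?_⟩
  -- the canonical surjection from the free group
  set f : FreeGroup (Fin m) →* Γ := FreeGroup.lift (fun i => (S.equivFin.symm i : Γ)) with hfdef
  have hfsurj : Function.Surjective f := by
    rw [← MonoidHom.range_eq_top, eq_top_iff, ← hcl, Subgroup.closure_le]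
    intro x hx
    exact ⟨FreeGroup.of (S.equivFin ⟨x, hx⟩), by simp [hfdef]⟩
  haveI : (f.ker).Normal := inferInstance
  -- the generic representation
  set g := Stmt8Aux.g m n with hg
  -- the ideal of relations coming from the kernel
  set Ew : f.ker → Ideal (Stmt8Aux.A m n) := fun w =>
    Ideal.span (Set.range fun jk : Fin n × Fin n =>
      ((g (w : FreeGroup (Fin m))).val - 1) jk.1 jk.2) with hEw
  have hfg : (⨆ w : f.ker, Ew w).FG := IsNoetherian.noetherian _
  obtain ⟨s, hs⟩ := CompleteLattice.IsCompactElement.exists_finset_of_le_iSup (Ideal (Stmt8Aux.A m n)) ((Submodule.fg_iff_compact _).mp hfg) Ew le_rfl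
  set R : Finset (FreeGroup (Fin m)) := s.image (fun w : f.ker => w.1) with hR
  have hRK : (R : Set (FreeGroup (Fin m))) ⊆ (f.ker : Set (FreeGroup (Fin m))) := by
    intro x hx
    rw [Finset.mem_coe, hR, Finset.mem_image] at hx
    obtain ⟨w, hw, rfl⟩ := hx
    exact w.2
  have hNC : Subgroup.normalClosure (R : Set (FreeGroup (Fin m))) ≤ f.ker :=
    Subgroup.normalClosure_le_normal hRK
  set π : (FreeGroup (Fin m) ⧸
      Subgroup.normalClosure (R : Set (FreeGroup (Fin m)))) →* Γ :=
    QuotientGroup.lift _ f (fun x hx => MonoidHom.mem_ker.mp (hNC hx)) with hπ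
  have hπmk : ∀ x : FreeGroup (Fin m), π (QuotientGroup.mk x) = f x := fun _ => rfl
  have hπsurj : Function.Surjective π := by
    intro γ
    obtain ⟨x, rfl⟩ := hfsurj γ
    exact ⟨QuotientGroup.mk x, rfl⟩
  refine ⟨R, π, hπsurj, ?_, ?_⟩
  · -- injectivity of precomposition
    intro ρ₁ ρ₂ h
    exact (MonoidHom.cancel_right hπsurj).mp h
  · -- surjectivity of precomposition
    intro ψ
    set ρ : FreeGroup (Fin m) →* Matrix.GeneralLinearGroup (Fin n) ℂ :=
      ψ.comp (QuotientGroup.mk' _) with hρdef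
    set p : Fin m → Matrix.GeneralLinearGroup (Fin n) ℂ := fun i => ρ (FreeGroup.of i) with hp
    have hρ : FreeGroup.lift p = ρ := by
      apply FreeGroup.ext_hom
      intro i
      simp [hp]
    set E := Stmt8Aux.evA m n p with hE
    -- the evaluation kills all ideals associated to relators in R
    have hker1 : ∀ w : f.ker, w ∈ s → Ew w ≤ RingHom.ker E := by
      intro w hws
      have hρw : ρ (w : FreeGroup (Fin m)) = 1 := by
        rw [hρdef]
        have : (QuotientGroup.mk' (Subgroup.normalClosure
            (R : Set (FreeGroup (Fin m))))) (w : FreeGroup (Fin m)) = 1 := by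
          rw [QuotientGroup.mk'_apply, QuotientGroup.eq_one_iff]
          apply Subgroup.subset_normalClosure
          rw [Finset.mem_coe, hR, Finset.mem_image]
          exact ⟨w, hws, rfl⟩
        simp [MonoidHom.comp_apply, this]
      have hval : ((g (w : FreeGroup (Fin m))).val).map E = 1 := by
        have h1 : (Stmt8Aux.glmap m n p) (g (w : FreeGroup (Fin m))) = 1 := by
          have := congrArg (fun F : FreeGroup (Fin m) →*
              (Matrix (Fin n) (Fin n) ℂ)ˣ => F (w : FreeGroup (Fin m)))
            (Stmt8Aux.glmap_comp_g m n p)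
          simp only [MonoidHom.comp_apply] at this
          rw [this, hρ, hρw]
        have := congrArg Units.val h1
        simpa [Stmt8Aux.glmap] using this
      rw [hEw, Ideal.span_le]
      rintro x ⟨jk, rfl⟩
      rw [SetLike.mem_coe, RingHom.mem_ker]
      have : (((g (w : FreeGroup (Fin m))).val - 1).map E) jk.1 jk.2 = 0 := by
        rw [Matrix.map_sub _ (by simp), hval,
          Matrix.map_one _ (map_zero _) (map_one _), sub_self]
        rfl
      exact this
    have hkerall : (⨆ w : f.ker, Ew w) ≤ RingHom.ker E := by
      refine le_trans hs ?_
      exact iSup₂_le fun w hw => hker1 w hw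
    -- hence ρ kills the whole kernel of f
    have hKkill : ∀ x ∈ f.ker, ρ x = 1 := by
      intro x hx
      have hEwle : Ew ⟨x, hx⟩ ≤ RingHom.ker E :=
        le_trans (le_iSup Ew ⟨x, hx⟩) hkerall
      have hval : ((g x).val).map E = 1 := by
        have hz : ∀ j k, E (((g x).val - 1) j k) = 0 := by
          intro j k
          have : ((g x).val - 1) j k ∈ Ew ⟨x, hx⟩ := by
            rw [hEw]
            exact Ideal.subset_span ⟨(j, k), rfl⟩
          exact RingHom.mem_ker.mp (hEwle this)
        have : (((g x).val - 1).map E) = 0 := by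
          ext j k
          exact hz j k
        have h2 : ((g x).val).map E - 1 = 0 := by
          rw [← this, Matrix.map_sub _ (by simp)]
          congr 1
          exact (Matrix.map_one _ (map_zero _) (map_one _)).symm
        exact sub_eq_zero.mp h2
      rw [← hρ]
      have := congrArg (fun F : FreeGroup (Fin m) →*
          (Matrix (Fin n) (Fin n) ℂ)ˣ => F x) (Stmt8Aux.glmap_comp_g m n p)
      simp only [MonoidHom.comp_apply] at this
      rw [← this]
      apply Units.ext
      simpa [Stmt8Aux.glmap] using hval
    -- factor ρ through Γ
    set e := QuotientGroup.quotientKerEquivOfSurjective f hfsurj with he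
    set ρ' : (FreeGroup (Fin m) ⧸ f.ker) →* Matrix.GeneralLinearGroup (Fin n) ℂ :=
      QuotientGroup.lift _ ρ hKkill with hρ'
    refine ⟨ρ'.comp e.symm.toMonoidHom, ?_⟩
    have hesymm : ∀ x : FreeGroup (Fin m), e.symm (f x) = QuotientGroup.mk x := by
      intro x
      apply e.injective
      rw [MulEquiv.apply_symm_apply]
      rfl
    apply QuotientGroup.monoidHom_ext
    ext x
    simp only [MonoidHom.comp_apply, QuotientGroup.mk'_apply]
    rw [hπmk, MulEquiv.coe_toMonoidHom, hesymm]
    rfl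
end

section
/- Let Q be the group with presentation ⟨a, x, y | a⁻¹xa = y, a⁻¹ya = x⟩. Then the subgroup S generated by {a², x, y} has index 2 in Q and is isomorphic to ℤ × F₂, where F₂ is the free group of rank 2. In particular, Q is large: it has a finite index subgroup admitting a surjective homomorphism onto a non-abelian free group. -/
/-- Relators of `Q = ⟨a, x, y | a⁻¹xa = y, a⁻¹ya = x⟩`, with `a, x, y` the generators
indexed by `0, 1, 2`. -/
def rels12 : Set (FreeGroup (Fin 3)) :=
  {(FreeGroup.of 0)⁻¹ * FreeGroup.of 1 * FreeGroup.of 0 * (FreeGroup.of 2)⁻¹,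
   (FreeGroup.of 0)⁻¹ * FreeGroup.of 2 * FreeGroup.of 0 * (FreeGroup.of 1)⁻¹}

namespace Q12

open SemidirectProduct

/-- The swap automorphism of the free group on two generators. -/
def σF : MulAut (FreeGroup Bool) :=
  FreeGroup.freeGroupCongr (Function.Involutive.toPerm not Bool.not_not)

lemma σF_sq : σF * σF = 1 := by
  show (σF.trans σF) = MulEquiv.refl _
  rw [show σF.trans σF = FreeGroup.freeGroupCongr
    ((Function.Involutive.toPerm not Bool.not_not).trans
      (Function.Involutive.toPerm not Bool.not_not)) from
    FreeGroup.freeGroupCongr_trans _ _]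
  rw [show (Function.Involutive.toPerm not Bool.not_not).trans
      (Function.Involutive.toPerm not Bool.not_not) = Equiv.refl Bool by
    ext b; simp [Function.Involutive.toPerm]]
  exact FreeGroup.freeGroupCongr_refl

def φQ : Multiplicative ℤ →* MulAut (FreeGroup Bool) := zpowersHom _ σF

lemma φQ_apply (n : ℤ) : φQ (Multiplicative.ofAdd n) = σF ^ n := rfl

lemma φQ_even (k : ℤ) : φQ (Multiplicative.ofAdd (2 * k)) = 1 := by
  rw [φQ_apply, zpow_mul, show σF ^ (2:ℤ) = 1 by rw [zpow_two]; exact σF_sq, one_zpow]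

abbrev G := FreeGroup Bool ⋊[φQ] Multiplicative ℤ

end Q12

namespace Q12

abbrev Q := PresentedGroup rels12

lemma relQ {r : FreeGroup (Fin 3)} (hr : r ∈ rels12) :
    (QuotientGroup.mk r : Q) = 1 :=
  (QuotientGroup.eq_one_iff r).2 (Subgroup.subset_normalClosure hr)

lemma of_eq (i : Fin 3) : (PresentedGroup.of i : Q) = QuotientGroup.mk (FreeGroup.of i) := rfl

lemma rel1 : (PresentedGroup.of 0 : Q)⁻¹ * PresentedGroup.of 1 * PresentedGroup.of 0 =
    PresentedGroup.of 2 := by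
  have h : ((PresentedGroup.of 0 : Q)⁻¹ * PresentedGroup.of 1 * PresentedGroup.of 0) *
      (PresentedGroup.of 2)⁻¹ = 1 := by
    have h' := relQ (Set.mem_insert _ _)
    simp only [of_eq, QuotientGroup.mk_mul, QuotientGroup.mk_inv] at h' ⊢
    exact h'
  exact mul_inv_eq_one.mp h

lemma rel2 : (PresentedGroup.of 0 : Q)⁻¹ * PresentedGroup.of 2 * PresentedGroup.of 0 =
    PresentedGroup.of 1 := by
  have h : ((PresentedGroup.of 0 : Q)⁻¹ * PresentedGroup.of 2 * PresentedGroup.of 0) *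
      (PresentedGroup.of 1)⁻¹ = 1 := by
    have h' := relQ (Set.mem_insert_of_mem _ rfl)
    simp only [of_eq, QuotientGroup.mk_mul, QuotientGroup.mk_inv] at h' ⊢
    exact h'
  exact mul_inv_eq_one.mp h

lemma relA1 : (PresentedGroup.of 0 : Q) * PresentedGroup.of 1 * (PresentedGroup.of 0)⁻¹ =
    PresentedGroup.of 2 := by
  have := rel2
  group at this ⊢
  rw [← this]; group

lemma relA2 : (PresentedGroup.of 0 : Q) * PresentedGroup.of 2 * (PresentedGroup.of 0)⁻¹ =
    PresentedGroup.of 1 := by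
  have := rel1
  group at this ⊢
  rw [← this]; group

end Q12

namespace Q12

open SemidirectProduct

lemma σF_of (b : Bool) : σF (FreeGroup.of b) = FreeGroup.of (!b) := by
  simp [σF, Function.Involutive.toPerm]

lemma σF_inv : σF⁻¹ = σF := inv_eq_of_mul_eq_one_right σF_sq

/-- generators of G -/
def fgen : Fin 3 → G :=
  ![inr (Multiplicative.ofAdd 1), inl (FreeGroup.of false), inl (FreeGroup.of true)]

lemma fgen0 : fgen 0 = inr (Multiplicative.ofAdd 1) := rfl
lemma fgen1 : fgen 1 = inl (FreeGroup.of false) := rfl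
lemma fgen2 : fgen 2 = inl (FreeGroup.of true) := rfl

lemma inr_conj (b : Bool) :
    (inr (Multiplicative.ofAdd 1) : G)⁻¹ * inl (FreeGroup.of b) * inr (Multiplicative.ofAdd 1) =
      inl (FreeGroup.of (!b)) := by
  rw [← map_inv, ← inl_aut_inv]
  have h : (φQ (Multiplicative.ofAdd 1))⁻¹ (FreeGroup.of b) = FreeGroup.of (!b) := by
    rw [φQ_apply, zpow_one, σF_inv, σF_of]
  rw [h]

lemma fgen_rels : ∀ r ∈ rels12, FreeGroup.lift fgen r = 1 := by
  rintro r (rfl | rfl) <;>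
  · simp only [map_mul, map_inv, FreeGroup.lift_apply_of, fgen0, fgen1, fgen2]
    rw [inr_conj]
    simp

/-- The forward homomorphism `Q →* G`. -/
def Φ : Q →* G := PresentedGroup.toGroup fgen_rels

/-- The map on free-group letters for the reverse homomorphism. -/
def fb : Bool → Q := fun b => if b then PresentedGroup.of 2 else PresentedGroup.of 1

def fN : FreeGroup Bool →* Q := FreeGroup.lift fb

def fZ : Multiplicative ℤ →* Q := zpowersHom Q (PresentedGroup.of 0)

lemma keyP : ∀ g : Multiplicative ℤ, ∀ n : FreeGroup Bool,
    fN (φQ g n) = fZ g * fN n * (fZ g)⁻¹ := by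
  intro g
  set P : Multiplicative ℤ → Prop :=
    fun g => ∀ n, fN (φQ g n) = fZ g * fN n * (fZ g)⁻¹ with hP
  have Pone : P 1 := by intro n; simp
  have Pmul : ∀ g h, P g → P h → P (g * h) := by
    intro g h pg ph n
    have : φQ (g * h) n = φQ g (φQ h n) := by simp [map_mul]
    rw [this, pg, ph, map_mul]
    group
  have Pinv : ∀ g, P g → P g⁻¹ := by
    intro g pg n
    have := pg (φQ g⁻¹ n)
    have h2 : φQ g (φQ g⁻¹ n) = n := by
      rw [← MulAut.mul_apply, ← map_mul, mul_inv_cancel, map_one, MulAut.one_apply]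
    rw [h2] at this
    have goal : fN ((φQ g⁻¹) n) = (fZ g)⁻¹ * fN n * fZ g := by
      rw [this]; group
    rw [goal, map_inv]
    group
  have Pbase : P (Multiplicative.ofAdd 1) := by
    intro n
    induction n using FreeGroup.induction_on with
    | C1 => simp
    | of b =>
      have : φQ (Multiplicative.ofAdd 1) (FreeGroup.of b) = FreeGroup.of (!b) := by
        rw [φQ_apply, zpow_one, σF_of]
      rw [this]
      have hz : fZ (Multiplicative.ofAdd 1) = PresentedGroup.of 0 := by
        simp [fZ]
      rw [hz]
      cases b
      · show fN (FreeGroup.of true) = _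
        rw [show fN (FreeGroup.of true) = PresentedGroup.of 2 from by simp [fN, fb],
          show fN (FreeGroup.of false) = PresentedGroup.of 1 from by simp [fN, fb]]
        exact relA1.symm
      · show fN (FreeGroup.of false) = _
        rw [show fN (FreeGroup.of false) = PresentedGroup.of 1 from by simp [fN, fb],
          show fN (FreeGroup.of true) = PresentedGroup.of 2 from by simp [fN, fb]]
        exact relA2.symm
    | inv_of b ih =>
      rw [map_inv, map_inv, ih, map_inv]
      group
    | mul u v ihu ihv =>
      rw [map_mul, map_mul, ihu, ihv, map_mul]
      group
  have : ∀ m : ℤ, P (Multiplicative.ofAdd m) := by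
    intro m
    induction m using Int.induction_on with
    | zero => exact Pone
    | succ k ih => exact Pmul _ _ ih Pbase
    | pred k ih => exact Pmul _ _ ih (Pinv _ Pbase)
  have hg : g = Multiplicative.ofAdd g.toAdd := rfl
  rw [hg]; exact this _

lemma compat : ∀ g : Multiplicative ℤ,
    fN.comp (φQ g).toMonoidHom = (MulAut.conj (fZ g)).toMonoidHom.comp fN := by
  intro g
  ext n
  simpa using keyP g (FreeGroup.of n)

/-- The reverse homomorphism `G →* Q`. -/
def Ψ : G →* Q := SemidirectProduct.lift fN fZ compat

end Q12

namespace Q12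

open SemidirectProduct

lemma Φ_of (i : Fin 3) : Φ (PresentedGroup.of i) = fgen i := PresentedGroup.toGroup.of _

lemma ΨΦ : Ψ.comp Φ = MonoidHom.id Q := by
  apply PresentedGroup.ext
  intro i
  fin_cases i
  · show Ψ (Φ (PresentedGroup.of 0)) = PresentedGroup.of 0
    rw [Φ_of, fgen0, show Ψ (inr (Multiplicative.ofAdd 1)) = fZ (Multiplicative.ofAdd 1) from
      SemidirectProduct.lift_inr _ _ _ _]
    simp [fZ]
  · show Ψ (Φ (PresentedGroup.of 1)) = PresentedGroup.of 1
    rw [Φ_of, fgen1, show Ψ (inl (FreeGroup.of false)) = fN (FreeGroup.of false) from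
      SemidirectProduct.lift_inl _ _ _ _]
    simp [fN, fb]
  · show Ψ (Φ (PresentedGroup.of 2)) = PresentedGroup.of 2
    rw [Φ_of, fgen2, show Ψ (inl (FreeGroup.of true)) = fN (FreeGroup.of true) from
      SemidirectProduct.lift_inl _ _ _ _]
    simp [fN, fb]

lemma ΦΨ : Φ.comp Ψ = MonoidHom.id G := by
  apply SemidirectProduct.hom_ext
  · apply FreeGroup.ext_hom
    intro b
    show Φ (Ψ (inl (FreeGroup.of b))) = inl (FreeGroup.of b)
    rw [show Ψ (inl (FreeGroup.of b)) = fN (FreeGroup.of b) from SemidirectProduct.lift_inl _ _ _ _]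
    cases b
    · rw [show fN (FreeGroup.of false) = PresentedGroup.of 1 from by simp [fN, fb], Φ_of, fgen1]
    · rw [show fN (FreeGroup.of true) = PresentedGroup.of 2 from by simp [fN, fb], Φ_of, fgen2]
  · apply MonoidHom.ext_mint
    show Φ (Ψ (inr (Multiplicative.ofAdd 1))) = inr (Multiplicative.ofAdd 1)
    rw [show Ψ (inr (Multiplicative.ofAdd 1)) = fZ (Multiplicative.ofAdd 1) from
      SemidirectProduct.lift_inr _ _ _ _]
    rw [show fZ (Multiplicative.ofAdd 1) = PresentedGroup.of 0 from by simp [fZ], Φ_of, fgen0]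

/-- The isomorphism `Q ≃* G`. -/
def e : Q ≃* G := MonoidHom.toMulEquiv Φ Ψ ΨΦ ΦΨ

end Q12

namespace Q12

open SemidirectProduct

lemma even_comm (k : ℤ) (w : FreeGroup Bool) :
    Commute (inr (Multiplicative.ofAdd (2 * k)) : G) (inl w) := by
  have h := SemidirectProduct.inl_aut (φ := φQ) (Multiplicative.ofAdd (2 * k)) w
  rw [φQ_even] at h
  simp only [MulAut.one_apply] at h
  show _ = _
  conv_rhs => rw [h]
  rw [mul_assoc, ← map_mul, inv_mul_cancel, map_one, mul_one]

end Q12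

namespace Q12

open SemidirectProduct

lemma inr_ofAdd_zpow (a k : ℤ) : (inr (Multiplicative.ofAdd a) : G) ^ k =
    inr (Multiplicative.ofAdd (a * k)) := by
  rw [← map_zpow]
  congr 1
  rw [← ofAdd_zsmul, smul_eq_mul, mul_comm]

def j : Multiplicative ℤ × FreeGroup Bool →* G :=
  MonoidHom.noncommCoprod (zpowersHom G (inr (Multiplicative.ofAdd 2))) inl
    (by
      intro m w
      show _ * _ = _ * _
      have : (zpowersHom G (inr (Multiplicative.ofAdd 2))) m =
          inr (Multiplicative.ofAdd (2 * m.toAdd)) := by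
        show (inr (Multiplicative.ofAdd 2) : G) ^ m.toAdd = _
        rw [inr_ofAdd_zpow]
      rw [this]
      exact even_comm m.toAdd w)

lemma j_apply (m : Multiplicative ℤ) (w : FreeGroup Bool) :
    j (m, w) = ⟨w, Multiplicative.ofAdd (2 * m.toAdd)⟩ := by
  show (inr (Multiplicative.ofAdd 2) : G) ^ m.toAdd * inl w = _
  rw [inr_ofAdd_zpow, (even_comm m.toAdd w).eq, mk_eq_inl_mul_inr]

lemma j_inj : Function.Injective j := by
  intro p q h
  rw [j_apply, j_apply, SemidirectProduct.ext_iff] at h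
  obtain ⟨h1, h2⟩ := h
  have : (2 : ℤ) * p.1.toAdd = 2 * q.1.toAdd := by
    simpa using congrArg Multiplicative.toAdd h2
  have hm : p.1 = q.1 := by
    have := mul_left_cancel₀ (two_ne_zero) this
    exact Multiplicative.toAdd.injective this
  exact Prod.ext hm h1

def χ : G →* Multiplicative (ZMod 2) :=
  (AddMonoidHom.toMultiplicative (Int.castAddHom (ZMod 2))).comp rightHom

lemma χ_surj : Function.Surjective χ := by
  intro z
  refine ⟨inr (Multiplicative.ofAdd (z.toAdd.val : ℤ)), ?_⟩
  show Multiplicative.ofAdd ((Multiplicative.toAdd (rightHom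
    (inr (Multiplicative.ofAdd (z.toAdd.val : ℤ)) : G)) : ℤ) : ZMod 2) = z
  rw [rightHom_inr]
  simp [ZMod.natCast_val, ZMod.intCast_cast, ZMod.cast_id]

lemma range_j_eq_ker : j.range = χ.ker := by
  apply le_antisymm
  · rintro _ ⟨⟨m, w⟩, rfl⟩
    rw [MonoidHom.mem_ker, j_apply]
    show Multiplicative.ofAdd (((2 * m.toAdd : ℤ) : ZMod 2)) = 1
    have : ((2 * m.toAdd : ℤ) : ZMod 2) = 0 := by
      rw [ZMod.intCast_zmod_eq_zero_iff_dvd]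
      exact dvd_mul_right 2 _
    rw [this]; rfl
  · intro g hg
    rw [MonoidHom.mem_ker] at hg
    have h0 : ((g.right.toAdd : ℤ) : ZMod 2) = 0 := by
      have : Multiplicative.ofAdd ((g.right.toAdd : ℤ) : ZMod 2) = 1 := hg
      simpa using congrArg Multiplicative.toAdd this
    have h2 : (2 : ℤ) ∣ g.right.toAdd := by
      rwa [ZMod.intCast_zmod_eq_zero_iff_dvd] at h0
    obtain ⟨k, hk⟩ := h2
    refine ⟨(Multiplicative.ofAdd k, g.left), ?_⟩
    rw [j_apply]
    show (⟨g.left, Multiplicative.ofAdd (2 * k)⟩ : G) = g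
    rw [← hk]
    rfl

end Q12

namespace Q12

open SemidirectProduct

def SG : Subgroup G := Subgroup.closure
  {(inr (Multiplicative.ofAdd 1) : G) ^ 2, inl (FreeGroup.of false), inl (FreeGroup.of true)}

lemma inr_one_sq : (inr (Multiplicative.ofAdd 1) : G) ^ 2 = inr (Multiplicative.ofAdd 2) := by
  rw [← map_pow]
  congr 1

lemma inl_mem_SG (w : FreeGroup Bool) : inl w ∈ SG := by
  have hw : w ∈ Subgroup.closure (Set.range (FreeGroup.of : Bool → FreeGroup Bool)) := by
    rw [FreeGroup.closure_range_of]; trivial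
  induction hw using Subgroup.closure_induction with
  | mem u hu =>
    obtain ⟨b, rfl⟩ := hu
    cases b
    · exact Subgroup.subset_closure (by simp)
    · exact Subgroup.subset_closure (by simp)
  | one => rw [map_one]; exact one_mem _
  | mul u v _ _ hu hv => rw [map_mul]; exact mul_mem hu hv
  | inv u _ hu => rw [map_inv]; exact inv_mem hu

lemma SG_eq_range : SG = j.range := by
  apply le_antisymm
  · rw [SG, Subgroup.closure_le]
    rintro g (rfl | rfl | rfl)
    · refine ⟨(Multiplicative.ofAdd 1, 1), ?_⟩
      rw [j_apply, inr_one_sq]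
      rfl
    · exact ⟨(1, FreeGroup.of false), by rw [j_apply]; rfl⟩
    · exact ⟨(1, FreeGroup.of true), by rw [j_apply]; rfl⟩
  · rintro _ ⟨⟨m, w⟩, rfl⟩
    show (zpowersHom G (inr (Multiplicative.ofAdd 2))) m * inl w ∈ SG
    refine mul_mem ?_ (inl_mem_SG w)
    show (inr (Multiplicative.ofAdd 2) : G) ^ m.toAdd ∈ SG
    refine zpow_mem ?_ _
    rw [← inr_one_sq]
    exact Subgroup.subset_closure (by simp)

lemma SG_index : SG.index = 2 := by
  rw [SG_eq_range, range_j_eq_ker, Subgroup.index_ker,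
    MonoidHom.range_eq_top.2 χ_surj]
  rw [show Nat.card (⊤ : Subgroup (Multiplicative (ZMod 2))) =
    Nat.card (Multiplicative (ZMod 2)) from Nat.card_congr Subgroup.topEquiv.toEquiv]
  rw [Nat.card_eq_fintype_card]
  rfl

lemma e_of (i : Fin 3) : e (PresentedGroup.of i) = fgen i := Φ_of i

def S : Subgroup Q := Subgroup.closure
  {(PresentedGroup.of 0 : Q) ^ 2, PresentedGroup.of 1, PresentedGroup.of 2}

lemma S_map : S.map (e : Q →* G) = SG := by
  rw [S, MonoidHom.map_closure]
  congr 1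
  rw [Set.image_insert_eq, Set.image_insert_eq, Set.image_singleton]
  have h0 : (e : Q →* G) ((PresentedGroup.of 0 : Q) ^ 2) =
      (inr (Multiplicative.ofAdd 1) : G) ^ 2 := by
    rw [map_pow]
    congr 1
  rw [h0, show (e : Q →* G) (PresentedGroup.of 1) = inl (FreeGroup.of false) from e_of 1,
    show (e : Q →* G) (PresentedGroup.of 2) = inl (FreeGroup.of true) from e_of 2]

lemma S_index : S.index = 2 := by
  rw [← SG_index, ← S_map]
  exact (Subgroup.index_map_eq S (f := (e : Q →* G)) e.surjective
    (le_of_eq_of_le ((MonoidHom.ker_eq_bot_iff _).2 e.injective) bot_le)).symm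

noncomputable def isoS : S ≃* Multiplicative ℤ × FreeGroup Bool :=
  ((e.subgroupMap S).trans
    (MulEquiv.subgroupCongr (S_map.trans SG_eq_range))).trans
    (MonoidHom.ofInjective j_inj).symm

end Q12

/-- In `Q = ⟨a, x, y | a⁻¹xa = y, a⁻¹ya = x⟩`, the subgroup `S = ⟨a², x, y⟩` has index 2
and is isomorphic to `ℤ × F₂`; in particular `Q` is large: it has a finite index
subgroup surjecting onto a non-abelian free group (here the free group of rank 2). -/
theorem stmt12 :
    (Subgroup.closure ({(PresentedGroup.of 0 : PresentedGroup rels12) ^ 2,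
        PresentedGroup.of 1, PresentedGroup.of 2} :
        Set (PresentedGroup rels12))).index = 2 ∧
    Nonempty (↥(Subgroup.closure ({(PresentedGroup.of 0 : PresentedGroup rels12) ^ 2,
        PresentedGroup.of 1, PresentedGroup.of 2} :
        Set (PresentedGroup rels12))) ≃* Multiplicative ℤ × FreeGroup Bool) ∧
    ∃ T : Subgroup (PresentedGroup rels12), T.index ≠ 0 ∧
      ∃ f : ↥T →* FreeGroup Bool, Function.Surjective f := by
  refine ⟨Q12.S_index, ⟨Q12.isoS⟩, Q12.S, ?_,
    ⟨(MonoidHom.snd _ _).comp Q12.isoS.toMonoidHom, ?_⟩⟩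
  · rw [Q12.S_index]; norm_num
  · intro w
    obtain ⟨s, hs⟩ := Q12.isoS.surjective (1, w)
    exact ⟨s, by simp [hs]⟩
end
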